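/- For distinct letters and a word w with distinct letters of length 4 over a linearly ordered alphabet: if w_4 is the maximum or minimum letter of w, and w admits both a Knuth/rotation move at positions 1,2,3 (a 2-edge) and at positions 2,3,4 (a 3-edge), then the word E_2(w) obtained by applying the 2-edge move does not admit a 3-edge. (Formally: if exactly one of w_1<w_2, w_2<w_3 holds and exactly one of w_2<w_3, w_3<w_4 holds, and w_4 ∈ {min, max} of {w_1,w_2,w_3,w_4}, then for any w' obtained from w by a Knuth or rotation transformation at positions 1,2,3, it is not the case that exactly one of w'_2<w'_3, w'_3<w'_4 holds.) -/

import Mathlib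

/-- A Knuth or rotation transformation on a triple of distinct letters:
Knuth moves `bac ↔ bca`, `acb ↔ cab`; rotation moves `bac ↔ acb`, `bca ↔ cab`,
for letters `a < b < c`. -/
def KRstep {α : Type*} [LinearOrder α] (p q : α × α × α) : Prop :=
  ∃ a b c : α, a < b ∧ b < c ∧
    ((p = (b, a, c) ∧ q = (b, c, a)) ∨ (p = (b, c, a) ∧ q = (b, a, c)) ∨
     (p = (a, c, b) ∧ q = (c, a, b)) ∨ (p = (c, a, b) ∧ q = (a, c, b)) ∨
     (p = (b, a, c) ∧ q = (a, c, b)) ∨ (p = (a, c, b) ∧ q = (b, a, c)) ∨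
     (p = (b, c, a) ∧ q = (c, a, b)) ∨ (p = (c, a, b) ∧ q = (b, c, a)))

set_option maxHeartbeats 1000000 in
/-- Let `w = w₁w₂w₃w₄` be a word with distinct letters such that `w₄` is the maximum or
minimum letter of `w`.  If `w` admits both a 2-edge (exactly one of `w₁ < w₂`, `w₂ < w₃`
holds) and a 3-edge (exactly one of `w₂ < w₃`, `w₃ < w₄` holds), then any word
`w' = w₁'w₂'w₃'w₄` obtained from `w` by a Knuth or rotation transformation at positions
`1, 2, 3` does not admit a 3-edge. -/
theorem E2_no_3_edge {α : Type*} [LinearOrder α] (w1 w2 w3 w4 w1' w2' w3' : α)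
    (h12 : w1 ≠ w2) (h13 : w1 ≠ w3) (h14 : w1 ≠ w4)
    (h23 : w2 ≠ w3) (h24 : w2 ≠ w4) (h34 : w3 ≠ w4)
    (hmaxmin : (w1 < w4 ∧ w2 < w4 ∧ w3 < w4) ∨ (w4 < w1 ∧ w4 < w2 ∧ w4 < w3))
    (h2edge : Xor' (w1 < w2) (w2 < w3))
    (h3edge : Xor' (w2 < w3) (w3 < w4))
    (hstep : KRstep (w1, w2, w3) (w1', w2', w3')) :
    ¬ Xor' (w2' < w3') (w3' < w4) := by
  obtain ⟨a, b, c, hab, hbc, hcase⟩ := hstep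
  rcases hcase with ⟨h, h'⟩ | ⟨h, h'⟩ | ⟨h, h'⟩ | ⟨h, h'⟩ | ⟨h, h'⟩ | ⟨h, h'⟩ | ⟨h, h'⟩ | ⟨h, h'⟩ <;>
    simp only [Prod.mk.injEq] at h h' <;>
    obtain ⟨h1, h2, h3⟩ := h <;> obtain ⟨h1', h2', h3'⟩ := h' <;>
    subst h1 h2 h3 h1' h2' h3' <;>
    simp only [Xor'] at * <;>
    rcases hmaxmin with ⟨m1, m2, m3⟩ | ⟨m1, m2, m3⟩ <;>
    rcases h2edge with ⟨p, q⟩ | ⟨p, q⟩ <;>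
    rcases h3edge with ⟨r, s⟩ | ⟨r, s⟩ <;>
    rintro (⟨x, y⟩ | ⟨x, y⟩) <;>
    first
      | (apply q; solve_by_elim (maxDepth := 6) [lt_trans])
      | (apply s; solve_by_elim (maxDepth := 6) [lt_trans])
      | (apply y; solve_by_elim (maxDepth := 6) [lt_trans])
      | (apply lt_asymm x; solve_by_elim (maxDepth := 6) [lt_trans])
      | (apply lt_asymm p; solve_by_elim (maxDepth := 6) [lt_trans])
      | (apply lt_asymm r; solve_by_elim (maxDepth := 6) [lt_trans])
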